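/- Let p be a prime and R a p-torsion free commutative ring such that (ϖ^p) = (p) for some ϖ ∈ R. If R is integrally closed in R[1/p], then the map R/ϖ → R/p induced by x ↦ x^p is injective. -/

import Mathlib

/-- if R is p-torsion free, (ϖ^p) = (p), and R is integrally closed
in R[1/p], then the map R/ϖ → R/p induced by x ↦ x^p is injective. -/
theorem stmt_8 {p : ℕ} (hp : p.Prime) (R : Type*) [CommRing R]
    (hnzd : (p : R) ∈ nonZeroDivisors R) (ϖ : R)
    (hspan : Ideal.span {ϖ ^ p} = Ideal.span {(p : R)})
    (hic : ∀ z : Localization.Away (p : R), IsIntegral R z →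
      ∃ x : R, algebraMap R (Localization.Away (p : R)) x = z) :
    ∀ x : R, x ^ p ∈ Ideal.span {(p : R)} → x ∈ Ideal.span {ϖ} := by
  intro x hx
  obtain ⟨a, ha⟩ := Ideal.mem_span_singleton'.mp
    (hspan ▸ Ideal.mem_span_singleton_self (ϖ ^ p))
  obtain ⟨b, hb⟩ := Ideal.mem_span_singleton'.mp
    (hspan ▸ Ideal.mem_span_singleton_self ((p : R)))
  -- ha : a * p = ϖ ^ p, hb : b * ϖ ^ p = p
  have hab : a * b = 1 := by
    have h : (p : R) * (a * b) = (p : R) * 1 := by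
      rw [mul_one]
      calc (p : R) * (a * b) = b * (a * (p : R)) := by ring
        _ = b * ϖ ^ p := by rw [ha]
        _ = (p : R) := hb
    exact (mul_cancel_left_mem_nonZeroDivisors hnzd).mp h
  obtain ⟨r, hr⟩ := Ideal.mem_span_singleton'.mp hx
  set S := Localization.Away (p : R)
  set f := algebraMap R S with hf
  have hinj : Function.Injective f := by
    apply IsLocalization.injective (M := Submonoid.powers (p : R)) S
    intro s hs
    obtain ⟨n, rfl⟩ := hs
    exact pow_mem hnzd n
  have hpu : IsUnit (f p) := IsLocalization.Away.algebraMap_isUnit (p : R)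
  have hau : IsUnit (f a) := (IsUnit.of_mul_eq_one (a := a) b hab).map f
  have hϖu : IsUnit (f ϖ) := by
    have h : IsUnit (f ϖ ^ p) := by
      rw [← map_pow, ← ha, map_mul]; exact hau.mul hpu
    exact (isUnit_pow_iff hp.ne_zero).mp h
  set u := hϖu.unit with hu
  have huv : (u : S) = f ϖ := rfl
  set z : S := f x * ↑u⁻¹ with hz
  have hzp : z ^ p = f (r * b) := by
    have h1 : z ^ p * f ϖ ^ p = f (r * b) * f ϖ ^ p := by
      have hcan : (↑u⁻¹ : S) ^ p * f ϖ ^ p = 1 := by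
        rw [← huv, ← mul_pow, Units.inv_mul, one_pow]
      rw [hz, mul_pow, mul_assoc, hcan, mul_one, ← map_pow, ← map_pow, ← map_mul]
      congr 1
      rw [← hr, ← hb]; ring
    exact (hϖu.pow p).mul_right_cancel h1
  have hint : IsIntegral R z := by
    refine ⟨Polynomial.X ^ p - Polynomial.C (r * b),
      Polynomial.monic_X_pow_sub_C _ hp.ne_zero, ?_⟩
    simp [hzp]
    exact sub_self _
  obtain ⟨y, hy⟩ := hic z hint
  have hxe : f x = f (ϖ * y) := by
    rw [map_mul, hy, hz, ← huv, mul_comm (↑u : S) _, mul_assoc, Units.inv_mul,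
      mul_one]
  rw [Ideal.mem_span_singleton']
  exact ⟨y, by rw [mul_comm]; exact (hinj hxe).symm⟩
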